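/- Let p be a prime, n, m, l ≥ 1, R = GR(p^n,m) = (ZMod (p^n))[X]/(f) for a monic basic irreducible f of degree m, ρ ∈ R[X] monic of degree l with reduction modulo (p) irreducible over R/(p), and S = R[X]/(ρ), a free R-module of rank l. Let Tr : S → R denote the trace form Algebra.trace R S. Then for every R-basis b : Fin l → S of S there exists a unique family b* : Fin l → S such that Tr(b*_i · b_j) = 1 if i = j and 0 otherwise; moreover b* is itself an R-basis of S, and every a ∈ S satisfies a = Σ_{i} Tr(b*_i · a) • b_i. -/

import Mathlib

set_option maxHeartbeats 2000000
set_option synthInstance.maxHeartbeats 400000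

/-- Let `R = GR(p^n, m)` and `S = R[X]/(ρ) = GR(p^n, m*l)`, a free
`R`-module of rank `l`, and let `Tr = Algebra.trace R S`. For every `R`-basis `b` of `S`
there is a unique trace-dual family `b*` with `Tr (b*ᵢ · bⱼ) = δᵢⱼ`; moreover `b*` is itself
an `R`-basis of `S` and every `a ∈ S` satisfies `a = Σᵢ Tr (b*ᵢ · a) • bᵢ`. -/
theorem galois_ring_trace_dual_basis (p n m l : ℕ) (hp : p.Prime)
    (hn : 0 < n) (hm : 0 < m) (hl : 0 < l)
    (f : Polynomial (ZMod (p ^ n))) (hf : f.Monic) (hdeg : f.natDegree = m)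
    (hirr : Irreducible (f.map (ZMod.castHom (dvd_pow_self p hn.ne') (ZMod p))))
    (ρ : Polynomial (AdjoinRoot f)) (hρ : ρ.Monic) (hρdeg : ρ.natDegree = l)
    (hρirr : Irreducible
      (ρ.map (Ideal.Quotient.mk (Ideal.span {(p : AdjoinRoot f)}))))
    (b : Module.Basis (Fin l) (AdjoinRoot f) (AdjoinRoot ρ)) :
    ∃ bs : Fin l → AdjoinRoot ρ,
      (∀ i j, Algebra.trace (AdjoinRoot f) (AdjoinRoot ρ) (bs i * b j) =
        if i = j then 1 else 0) ∧
      (∀ bs' : Fin l → AdjoinRoot ρ,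
        (∀ i j, Algebra.trace (AdjoinRoot f) (AdjoinRoot ρ) (bs' i * b j) =
          if i = j then 1 else 0) → bs' = bs) ∧
      (∃ bdual : Module.Basis (Fin l) (AdjoinRoot f) (AdjoinRoot ρ), ∀ i, bdual i = bs i) ∧
      (∀ a : AdjoinRoot ρ,
        a = ∑ i, Algebra.trace (AdjoinRoot f) (AdjoinRoot ρ) (bs i * a) • b i) := by
  classical
  haveI : Fact p.Prime := ⟨hp⟩
  haveI : NeZero p := ⟨hp.pos.ne'⟩
  haveI : NeZero (p ^ n) := ⟨pow_ne_zero n hp.pos.ne'⟩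
  set R := AdjoinRoot f with hR
  set S := AdjoinRoot ρ with hS
  set I : Ideal R := Ideal.span {(p : R)} with hI
  set J : Ideal S := Ideal.span {(p : S)} with hJ
  -- p^n = 0 in R
  have hpn : (p : R) ^ n = 0 := by
    have h1 : ((p ^ n : ℕ) : R) = 0 := by
      rw [← map_natCast (algebraMap (ZMod (p ^ n)) R) (p ^ n), ZMod.natCast_self, map_zero]
    calc (p : R) ^ n = ((p ^ n : ℕ) : R) := by push_cast; ring
    _ = 0 := h1
  -- units lift along mk I
  have hunit : ∀ x : R, IsUnit (Ideal.Quotient.mk I x) → IsUnit x := by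
    intro x hx
    obtain ⟨y, hy⟩ := Ideal.Quotient.mk_surjective (↑hx.unit⁻¹ : R ⧸ I)
    have h1 : Ideal.Quotient.mk I (x * y) = 1 := by
      rw [map_mul, hy]; exact hx.mul_val_inv
    have h2 : x * y - 1 ∈ I := by
      rw [← Ideal.Quotient.eq_zero_iff_mem, map_sub, h1, map_one, sub_self]
    rw [hI, Ideal.mem_span_singleton] at h2
    obtain ⟨c, hc⟩ := h2
    have h3 : IsUnit (x * y) := by
      have hxy : x * y = 1 + (p : R) * c := by rw [← hc]; ring
      rw [hxy]
      exact IsNilpotent.isUnit_one_add ⟨n, by rw [mul_pow, hpn, zero_mul]⟩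
    exact isUnit_of_mul_isUnit_left h3
  -- the residue field of `ZMod (p^n)` is `ZMod p`
  have hker : RingHom.ker (ZMod.castHom (dvd_pow_self p hn.ne') (ZMod p)) =
      Ideal.span {(p : ZMod (p ^ n))} := by
    ext x
    rw [RingHom.mem_ker, Ideal.mem_span_singleton]
    constructor
    · intro h
      have hv : ((x.val : ℕ) : ZMod p) = 0 := by
        rw [ZMod.natCast_val, ← ZMod.castHom_apply (h := dvd_pow_self p hn.ne')]; exact h
      rw [ZMod.natCast_eq_zero_iff] at hv
      obtain ⟨c, hc⟩ := hv
      refine ⟨(c : ZMod (p ^ n)), ?_⟩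
      rw [← ZMod.natCast_zmod_val x, hc]; push_cast; ring
    · rintro ⟨c, rfl⟩
      rw [map_mul, map_natCast, ZMod.natCast_self, zero_mul]
  have hsurj : Function.Surjective (ZMod.castHom (dvd_pow_self p hn.ne') (ZMod p)) := by
    intro y
    exact ⟨((y.val : ℕ) : ZMod (p ^ n)), by rw [map_natCast, ZMod.natCast_zmod_val]⟩
  let e2 : (ZMod (p ^ n) ⧸ Ideal.span {(p : ZMod (p ^ n))}) ≃+* ZMod p :=
    (Ideal.quotEquivOfEq hker.symm).trans (RingHom.quotientKerEquivOfSurjective hsurj)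
  have he2 : ∀ x, e2 (Ideal.Quotient.mk (Ideal.span {(p : ZMod (p ^ n))}) x) =
      ZMod.castHom (dvd_pow_self p hn.ne') (ZMod p) x := fun x => rfl
  have hcomp : ((e2 : (ZMod (p ^ n) ⧸ Ideal.span {(p : ZMod (p ^ n))}) →+* ZMod p).comp
      (Ideal.Quotient.mk (Ideal.span {(p : ZMod (p ^ n))}))) =
      ZMod.castHom (dvd_pow_self p hn.ne') (ZMod p) := RingHom.ext he2
  -- `k := R ⧸ I` is a field
  have hIf : I = (Ideal.span {(p : ZMod (p ^ n))}).map (AdjoinRoot.of f) := by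
    rw [hI, Ideal.map_span, Set.image_singleton, map_natCast]
  haveI hmaxf : (Ideal.span {f.map (ZMod.castHom (dvd_pow_self p hn.ne') (ZMod p))}).IsMaximal :=
    PrincipalIdealRing.isMaximal_of_irreducible hirr
  letI : Field ((Polynomial (ZMod p)) ⧸
      Ideal.span {f.map (ZMod.castHom (dvd_pow_self p hn.ne') (ZMod p))}) :=
    Ideal.Quotient.field _
  let E2 : ((Polynomial (ZMod (p ^ n) ⧸ Ideal.span {(p : ZMod (p ^ n))})) ⧸
        Ideal.span {f.map (Ideal.Quotient.mk (Ideal.span {(p : ZMod (p ^ n))}))}) ≃+*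
      ((Polynomial (ZMod p)) ⧸ Ideal.span {f.map (ZMod.castHom (dvd_pow_self p hn.ne') (ZMod p))}) :=
    Ideal.quotientEquiv _ _ (Polynomial.mapEquiv e2) (by
      rw [Ideal.map_span, Set.image_singleton]
      congr 1
      congr 1
      show f.map _ = Polynomial.map (e2 : ZMod (p ^ n) ⧸ Ideal.span {(p : ZMod (p ^ n))} →+* ZMod p)
        (f.map (Ideal.Quotient.mk (Ideal.span {(p : ZMod (p ^ n))})))
      rw [Polynomial.map_map, hcomp])
  let Ek : (R ⧸ I) ≃+*
      ((Polynomial (ZMod p)) ⧸ Ideal.span {f.map (ZMod.castHom (dvd_pow_self p hn.ne') (ZMod p))}) :=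
    ((Ideal.quotEquivOfEq hIf).trans
      (AdjoinRoot.quotAdjoinRootEquivQuotPolynomialQuot (Ideal.span {(p : ZMod (p ^ n))}) f)).trans E2
  letI : Field (R ⧸ I) := (MulEquiv.isField (Field.toIsField _) Ek.toMulEquiv).toField
  -- `Sbar := S ⧸ J` is a field
  have hJρ : J = I.map (AdjoinRoot.of ρ) := by
    rw [hI, hJ, Ideal.map_span, Set.image_singleton, map_natCast]
  haveI hmaxρ : (Ideal.span {ρ.map (Ideal.Quotient.mk I)}).IsMaximal :=
    PrincipalIdealRing.isMaximal_of_irreducible hρirr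
  letI : Field ((Polynomial (R ⧸ I)) ⧸ Ideal.span {ρ.map (Ideal.Quotient.mk I)}) :=
    Ideal.Quotient.field _
  let ES : (S ⧸ J) ≃+* ((Polynomial (R ⧸ I)) ⧸ Ideal.span {ρ.map (Ideal.Quotient.mk I)}) :=
    (Ideal.quotEquivOfEq hJρ).trans (AdjoinRoot.quotAdjoinRootEquivQuotPolynomialQuot I ρ)
  letI : Field (S ⧸ J) := (MulEquiv.isField (Field.toIsField _) ES.toMulEquiv).toField
  -- algebra structure of `S⧸J` over `R⧸I`
  have hle : I ≤ J.comap (algebraMap R S) := by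
    rw [hJρ, AdjoinRoot.algebraMap_eq]; exact Ideal.le_comap_map
  letI algkS : Algebra (R ⧸ I) (S ⧸ J) := (Ideal.quotientMap J (algebraMap R S) hle).toAlgebra
  have halg : ∀ (c : R) (s : S),
      (Ideal.Quotient.mk I c) • (Ideal.Quotient.mk J s) = Ideal.Quotient.mk J (c • s) := by
    intro c s
    rw [Algebra.smul_def]
    show Ideal.quotientMap J (algebraMap R S) hle (Ideal.Quotient.mk I c) * _ = _
    rw [Ideal.quotientMap_mk, ← map_mul, ← Algebra.smul_def]
  have hp0 : Ideal.Quotient.mk I ((p : R)) = 0 :=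
    Ideal.Quotient.eq_zero_iff_mem.mpr (by rw [hI]; exact Ideal.subset_span rfl)
  -- the induced basis of `S⧸J` over `R⧸I`
  have hsp : ⊤ ≤ Submodule.span (R ⧸ I)
      (Set.range fun i => Ideal.Quotient.mk J (b i)) := by
    rintro x -
    obtain ⟨s, rfl⟩ := Ideal.Quotient.mk_surjective x
    rw [← b.sum_repr s, map_sum]
    refine Submodule.sum_mem _ fun i _ => ?_
    rw [← halg]
    exact Submodule.smul_mem _ _ (Submodule.subset_span ⟨i, rfl⟩)
  have hli : LinearIndependent (R ⧸ I) (fun i => Ideal.Quotient.mk J (b i)) := by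
    rw [Fintype.linearIndependent_iff]
    intro g hg i
    choose c hc using fun i => Ideal.Quotient.mk_surjective (g i)
    have hsum : Ideal.Quotient.mk J (∑ i, c i • b i) = 0 := by
      rw [map_sum, ← hg]
      exact Finset.sum_congr rfl fun i _ => by rw [← hc, halg]
    rw [Ideal.Quotient.eq_zero_iff_mem, hJ, Ideal.mem_span_singleton] at hsum
    obtain ⟨t, ht⟩ := hsum
    have hpt : (p : S) * t = ∑ j, ((p : R) * b.repr t j) • b j := by
      have h1 : (p : S) * t = (p : R) • t := by
        rw [Algebra.smul_def, map_natCast]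
      rw [h1]
      conv_lhs => rw [← b.sum_repr t]
      rw [Finset.smul_sum]
      exact Finset.sum_congr rfl fun j _ => (smul_smul _ _ _)
    have hceq : ∀ j, c j = (p : R) * b.repr t j := by
      intro j
      have h2 := congrArg (fun x => ⇑(b.repr x)) (ht.trans hpt)
      simp only [Module.Basis.repr_sum_self] at h2
      exact congrFun h2 j
    rw [← hc i, hceq i, map_mul, hp0, zero_mul]
  let bbar : Module.Basis (Fin l) (R ⧸ I) (S ⧸ J) := Module.Basis.mk hli hsp
  have hbbar : ∀ i, bbar i = Ideal.Quotient.mk J (b i) := fun i => Module.Basis.mk_apply _ _ i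
  have hrepr : ∀ (x : S) (i), bbar.repr (Ideal.Quotient.mk J x) i =
      Ideal.Quotient.mk I (b.repr x i) := by
    intro x i
    have h1 : Ideal.Quotient.mk J x = ∑ j, (Ideal.Quotient.mk I (b.repr x j)) • bbar j := by
      conv_lhs => rw [← b.sum_repr x]
      rw [map_sum]
      exact Finset.sum_congr rfl fun j _ => by rw [hbbar, halg]
    rw [h1, bbar.repr_sum_self]
  -- trace compatibility
  have htr : ∀ s : S, Ideal.Quotient.mk I (Algebra.trace R S s) =
      Algebra.trace (R ⧸ I) (S ⧸ J) (Ideal.Quotient.mk J s) := by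
    intro s
    rw [Algebra.trace_eq_matrix_trace b, Algebra.trace_eq_matrix_trace bbar,
      Matrix.trace, Matrix.trace, map_sum]
    refine Finset.sum_congr rfl fun i _ => ?_
    rw [Matrix.diag_apply, Matrix.diag_apply, Algebra.leftMulMatrix_eq_repr_mul,
      Algebra.leftMulMatrix_eq_repr_mul, hbbar, ← map_mul, hrepr]
  -- separability instances
  haveI : Module.Finite (ZMod (p ^ n)) R := Module.Finite.of_basis (AdjoinRoot.powerBasis' hf).basis
  haveI : Finite R := Module.finite_of_finite (ZMod (p ^ n))
  haveI : Finite (R ⧸ I) := Finite.of_surjective _ Ideal.Quotient.mk_surjective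
  haveI : PerfectField (R ⧸ I) := PerfectField.ofFinite
  haveI : FiniteDimensional (R ⧸ I) (S ⧸ J) := Module.Finite.of_basis bbar
  haveI : Algebra.IsAlgebraic (R ⧸ I) (S ⧸ J) := Algebra.IsAlgebraic.of_finite _ _
  haveI : Algebra.IsSeparable (R ⧸ I) (S ⧸ J) := inferInstance
  -- the Gram matrix of the trace form is invertible
  let A : Matrix (Fin l) (Fin l) R := Matrix.of fun i j => Algebra.trace R S (b i * b j)
  have hmapA : A.map (Ideal.Quotient.mk I) =
      LinearMap.BilinForm.toMatrix bbar (Algebra.traceForm (R ⧸ I) (S ⧸ J)) := by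
    ext i j
    rw [Matrix.map_apply, Algebra.traceForm_toMatrix]
    show Ideal.Quotient.mk I (Algebra.trace R S (b i * b j)) = _
    rw [htr, map_mul, hbbar, hbbar]
  have hdetA : IsUnit A.det := by
    refine hunit _ ?_
    rw [RingHom.map_det, RingHom.mapMatrix_apply, hmapA]
    exact isUnit_iff_ne_zero.mpr (det_traceForm_ne_zero bbar)
  -- the dual family
  set P : Matrix (Fin l) (Fin l) R := A⁻¹ with hP
  have hPA : P * A = 1 := Matrix.nonsing_inv_mul A hdetA
  set bs : Fin l → S := fun i => ∑ j, P i j • b j with hbs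
  have htrace_sum : ∀ (c : Fin l → R) (j : Fin l),
      Algebra.trace R S ((∑ t, c t • b t) * b j) = ∑ t, c t * A t j := by
    intro c j
    rw [Finset.sum_mul, map_sum]
    exact Finset.sum_congr rfl fun t _ => by
      rw [smul_mul_assoc, map_smul, smul_eq_mul]; rfl
  have hmain : ∀ i j, Algebra.trace R S (bs i * b j) = if i = j then 1 else 0 := by
    intro i j
    rw [hbs]
    rw [htrace_sum (fun t => P i t) j]
    rw [show (∑ t, P i t * A t j) = (P * A) i j from (Matrix.mul_apply).symm, hPA,
      Matrix.one_apply]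
  have huniq : ∀ bs' : Fin l → S, (∀ i j, Algebra.trace R S (bs' i * b j) =
      if i = j then 1 else 0) → bs' = bs := by
    intro bs' h'
    funext i
    have hx : bs' i = ∑ t, b.repr (bs' i) t • b t := (b.sum_repr _).symm
    have hcA : ∀ j, ∑ t, b.repr (bs' i) t * A t j = if i = j then 1 else 0 := by
      intro j
      rw [← htrace_sum (fun t => b.repr (bs' i) t) j, ← hx, h']
    have hPj : ∀ j, ∑ t, P i t * A t j = if i = j then 1 else 0 := by
      intro j
      rw [show (∑ t, P i t * A t j) = (P * A) i j from (Matrix.mul_apply).symm, hPA,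
        Matrix.one_apply]
    have hv : Matrix.vecMul (fun t => b.repr (bs' i) t - P i t) A = 0 := by
      funext j
      show ∑ t, (b.repr (bs' i) t - P i t) * A t j = (0 : R)
      simp only [sub_mul]
      rw [Finset.sum_sub_distrib, hcA j, hPj j, sub_self]
    have hveq : (fun t => b.repr (bs' i) t - P i t) = 0 := by
      have h6 := congrArg (fun w => Matrix.vecMul w A⁻¹) hv
      simp only [Matrix.vecMul_vecMul, Matrix.mul_nonsing_inv A hdetA, Matrix.vecMul_one,
        Matrix.zero_vecMul] at h6
      have h7 : Matrix.vecMul (Matrix.vecMul (fun t => b.repr (bs' i) t - P i t) A) A⁻¹ =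
          (fun t => b.repr (bs' i) t - P i t) := by
        rw [Matrix.vecMul_vecMul, Matrix.mul_nonsing_inv A hdetA, Matrix.vecMul_one]
      exact h7.symm.trans h6
    have hc : ∀ t, b.repr (bs' i) t = P i t := fun t => sub_eq_zero.mp (congrFun hveq t)
    rw [hx, hbs]
    exact Finset.sum_congr rfl fun t _ => by rw [hc t]
  have hPTdet : IsUnit P.transpose.det := by
    rw [Matrix.det_transpose]
    exact A.isUnit_nonsing_inv_det hdetA
  refine ⟨bs, hmain, huniq, ⟨b.map (Matrix.toLinearEquiv b P.transpose hPTdet), ?_⟩, ?_⟩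
  · intro i
    rw [Module.Basis.map_apply, Matrix.toLinearEquiv_apply, Matrix.toLin_self]
    exact Finset.sum_congr rfl fun j _ => by rw [Matrix.transpose_apply]
  · intro a
    have hco : ∀ i, Algebra.trace R S (bs i * a) = b.repr a i := by
      intro i
      conv_lhs => rw [← b.sum_repr a]
      rw [Finset.mul_sum, map_sum]
      have hterm : ∀ t, Algebra.trace R S (bs i * (b.repr a t • b t)) =
          b.repr a t * (if i = t then 1 else 0) := by
        intro t
        rw [mul_smul_comm, map_smul, smul_eq_mul, hmain]
      rw [Finset.sum_congr rfl fun t _ => hterm t]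
      simp [Finset.sum_ite_eq]
    conv_lhs => rw [← b.sum_repr a]
    exact Finset.sum_congr rfl fun i _ => by rw [hco i]
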